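/- (Fu's decomposition lemma) In a normed BPA system, for a process X₁X₂…X_kα: (i) X₁X₂…X_kα ≃ α if and only if X_iα ≃ α for all 1 ≤ i ≤ k; (ii) X₁X₂…X_kα ≈ α if and only if X_iα ≈ α for all 1 ≤ i ≤ k. -/

import Mathlib

/-- Silent-step closure (⇒): reflexive transitive closure of τ-transitions. -/
def SilentStar {S A : Type*} (trans : S → A → S → Prop) (tau : A) : S → S → Prop :=
  Relation.ReflTransGen (fun p q => trans p tau q)

/-- A symmetric relation is a branching bisimulation. -/
def IsBranchingBisim {S A : Type*} (trans : S → A → S → Prop) (tau : A)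
    (R : S → S → Prop) : Prop :=
  Symmetric R ∧
  ∀ a b a' (l : A), R a b → trans a l a' →
    (l = tau ∧ R a' b) ∨
    ∃ b'' b', SilentStar trans tau b b'' ∧ trans b'' l b' ∧ R a b'' ∧ R a' b'

/-- A symmetric relation is a weak bisimulation. -/
def IsWeakBisim {S A : Type*} (trans : S → A → S → Prop) (tau : A)
    (R : S → S → Prop) : Prop :=
  Symmetric R ∧
  ∀ a b a' (l : A), R a b → trans a l a' →
    (l = tau ∧ R a' b) ∨
    ∃ g1 g2 b', SilentStar trans tau b g1 ∧ trans g1 l g2 ∧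
      SilentStar trans tau g2 b' ∧ R a' b'

/-- Branching bisimilarity: the union of all branching bisimulations. -/
def BrBisim {S A : Type*} (trans : S → A → S → Prop) (tau : A) (a b : S) : Prop :=
  ∃ R, IsBranchingBisim trans tau R ∧ R a b

/-- Weak bisimilarity: the union of all weak bisimulations. -/
def WkBisim {S A : Type*} (trans : S → A → S → Prop) (tau : A) (a b : S) : Prop :=
  ∃ R, IsWeakBisim trans tau R ∧ R a b

/-- One-step transition of a BPA system: X β →λ α β whenever X →λ α is a rule. -/
def BPA.Trans {V A : Type*} (rules : V → A → List V → Prop)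
    (p : List V) (l : A) (q : List V) : Prop :=
  ∃ X α β, p = X :: β ∧ rules X l α ∧ q = α ++ β

/-- A step by some action. -/
def BPA.Step {V A : Type*} (rules : V → A → List V → Prop) (p q : List V) : Prop :=
  ∃ l, BPA.Trans rules p l q

/-- Reachability in a BPA system. -/
def BPA.Reach {V A : Type*} (rules : V → A → List V → Prop) : List V → List V → Prop :=
  Relation.ReflTransGen (BPA.Step rules)

/-- A BPA system is normed if every variable can reach the empty process ε. -/
def BPA.Normed {V A : Type*} (rules : V → A → List V → Prop) : Prop :=
  ∀ X : V, BPA.Reach rules [X] []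

/-- The redundant set Rd(α) = { X | Xα ≃ α }. -/
def BPA.Rd {V A : Type*} (rules : V → A → List V → Prop) (tau : A) (α : List V) : Set V :=
  {X | BrBisim (BPA.Trans rules) tau (X :: α) α}

section LTSLemmas

variable {S A : Type*} {tr : S → A → S → Prop} {tau : A}

theorem brb_symm {a b : S} (h : BrBisim tr tau a b) : BrBisim tr tau b a :=
  let ⟨R, hR, hab⟩ := h; ⟨R, hR, hR.1 hab⟩

theorem brb_refl (a : S) : BrBisim tr tau a a :=
  ⟨Eq, ⟨fun _ _ h => h.symm, by
    rintro a b a' l rfl ht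
    exact Or.inr ⟨a, a', .refl, ht, rfl, rfl⟩⟩, rfl⟩

theorem brb_isBisim : IsBranchingBisim tr tau (BrBisim tr tau) := by
  constructor
  · intro a b h; exact brb_symm h
  · rintro a b a' l ⟨R, hR, hab⟩ ht
    rcases hR.2 a b a' l hab ht with ⟨hl, h⟩ | ⟨b'', b', h1, h2, h3, h4⟩
    · exact Or.inl ⟨hl, R, hR, h⟩
    · exact Or.inr ⟨b'', b', h1, h2, ⟨R, hR, h3⟩, ⟨R, hR, h4⟩⟩

theorem brb_transfer {a b a' : S} {l : A} (h : BrBisim tr tau a b) (ht : tr a l a') :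
    (l = tau ∧ BrBisim tr tau a' b) ∨
    ∃ b'' b', SilentStar tr tau b b'' ∧ tr b'' l b' ∧ BrBisim tr tau a b'' ∧ BrBisim tr tau a' b' :=
  brb_isBisim.2 a b a' l h ht

/-! ### Semi-branching bisimulations -/

def IsSemiBr (tr : S → A → S → Prop) (tau : A) (R : S → S → Prop) : Prop :=
  Symmetric R ∧
  ∀ a b a' (l : A), R a b → tr a l a' →
    (l = tau ∧ ∃ b₁, SilentStar tr tau b b₁ ∧ R a b₁ ∧ R a' b₁) ∨
    (∃ b'' b', SilentStar tr tau b b'' ∧ tr b'' l b' ∧ R a b'' ∧ R a' b')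

def SemiBisim (tr : S → A → S → Prop) (tau : A) (a b : S) : Prop :=
  ∃ R, IsSemiBr tr tau R ∧ R a b

theorem isSemiBr_of_isBranching {R : S → S → Prop} (h : IsBranchingBisim tr tau R) :
    IsSemiBr tr tau R := by
  refine ⟨h.1, ?_⟩
  intro a b a' l hab ht
  rcases h.2 a b a' l hab ht with ⟨hl, h'⟩ | h'
  · exact Or.inl ⟨hl, b, .refl, hab, h'⟩
  · exact Or.inr h'

theorem semib_symm {a b : S} (h : SemiBisim tr tau a b) : SemiBisim tr tau b a :=
  let ⟨R, hR, hab⟩ := h; ⟨R, hR, hR.1 hab⟩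

theorem semib_refl (a : S) : SemiBisim tr tau a a :=
  ⟨Eq, ⟨fun _ _ h => h.symm, by
    rintro a b a' l rfl ht
    exact Or.inr ⟨a, a', .refl, ht, rfl, rfl⟩⟩, rfl⟩

theorem semib_isSemi : IsSemiBr tr tau (SemiBisim tr tau) := by
  constructor
  · intro a b h; exact semib_symm h
  · rintro a b a' l ⟨R, hR, hab⟩ ht
    rcases hR.2 a b a' l hab ht with ⟨hl, b₁, hs, h1, h2⟩ | ⟨b'', b', h1, h2, h3, h4⟩
    · exact Or.inl ⟨hl, b₁, hs, ⟨R, hR, h1⟩, ⟨R, hR, h2⟩⟩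
    · exact Or.inr ⟨b'', b', h1, h2, ⟨R, hR, h3⟩, ⟨R, hR, h4⟩⟩

theorem semi_runmatch {R : S → S → Prop} (hR : IsSemiBr tr tau R) {b c b' : S}
    (hbc : R b c) (hrun : SilentStar tr tau b b') :
    ∃ c', SilentStar tr tau c c' ∧ R b' c' := by
  suffices H : ∀ d, R b d → ∃ c', SilentStar tr tau d c' ∧ R b' c' from H c hbc
  clear hbc
  have H : ∀ c, R b c → ∃ c', SilentStar tr tau c c' ∧ R b' c' := by
    induction hrun using Relation.ReflTransGen.head_induction_on with
    | refl => exact fun c hc => ⟨c, .refl, hc⟩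
    | head hstep _ ih =>
      intro c hc
      rcases hR.2 _ _ _ _ hc hstep with ⟨-, c₁, hs, -, h2⟩ | ⟨c'', c', hs, ht, -, h2⟩
      · obtain ⟨c₂, hs', hr⟩ := ih _ h2
        exact ⟨c₂, hs.trans hs', hr⟩
      · obtain ⟨c₂, hs', hr⟩ := ih _ h2
        exact ⟨c₂, (hs.tail ht).trans hs', hr⟩
  exact H

theorem semi_comp_transfer {R Q : S → S → Prop} (hR : IsSemiBr tr tau R) (hQ : IsSemiBr tr tau Q)
    {a b c a' : S} {l : A} (hab : R a b) (hbc : Q b c) (ht : tr a l a') :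
    (l = tau ∧ ∃ c₁, SilentStar tr tau c c₁ ∧ (∃ m, R a m ∧ Q m c₁) ∧ (∃ m, R a' m ∧ Q m c₁)) ∨
    (∃ c'' c', SilentStar tr tau c c'' ∧ tr c'' l c' ∧
      (∃ m, R a m ∧ Q m c'') ∧ (∃ m, R a' m ∧ Q m c')) := by
  rcases hR.2 _ _ _ _ hab ht with ⟨hl, b₁, hb, h1, h2⟩ | ⟨b'', b', hb, ht', h1, h2⟩
  · obtain ⟨c₁, hc, hq⟩ := semi_runmatch hQ hbc hb
    exact Or.inl ⟨hl, c₁, hc, ⟨b₁, h1, hq⟩, ⟨b₁, h2, hq⟩⟩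
  · obtain ⟨c₁, hc, hq⟩ := semi_runmatch hQ hbc hb
    rcases hQ.2 _ _ _ _ hq ht' with ⟨hl, c₂, hc2, hq1, hq2⟩ | ⟨c₃, c₄, hc2, ht2, hq1, hq2⟩
    · exact Or.inl ⟨hl, c₂, hc.trans hc2, ⟨b'', h1, hq1⟩, ⟨b', h2, hq2⟩⟩
    · exact Or.inr ⟨c₃, c₄, hc.trans hc2, ht2, ⟨b'', h1, hq1⟩, ⟨b', h2, hq2⟩⟩

theorem semib_trans {a b c : S} (h1 : SemiBisim tr tau a b) (h2 : SemiBisim tr tau b c) :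
    SemiBisim tr tau a c := by
  obtain ⟨R, hR, hab⟩ := h1
  obtain ⟨Q, hQ, hbc⟩ := h2
  refine ⟨fun x y => (∃ m, R x m ∧ Q m y) ∨ (∃ m, Q x m ∧ R m y), ⟨?_, ?_⟩,
    Or.inl ⟨b, hab, hbc⟩⟩
  · rintro x y (⟨m, hx, hy⟩ | ⟨m, hx, hy⟩)
    · exact Or.inr ⟨m, hQ.1 hy, hR.1 hx⟩
    · exact Or.inl ⟨m, hR.1 hy, hQ.1 hx⟩
  · rintro x y x' l (⟨m, hxm, hmy⟩ | ⟨m, hxm, hmy⟩) ht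
    · rcases semi_comp_transfer hR hQ hxm hmy ht with ⟨hl, c₁, hs, hh1, hh2⟩ |
        ⟨c'', c', hs, ht', hh1, hh2⟩
      · exact Or.inl ⟨hl, c₁, hs, Or.inl hh1, Or.inl hh2⟩
      · exact Or.inr ⟨c'', c', hs, ht', Or.inl hh1, Or.inl hh2⟩
    · rcases semi_comp_transfer hQ hR hxm hmy ht with ⟨hl, c₁, hs, hh1, hh2⟩ |
        ⟨c'', c', hs, ht', hh1, hh2⟩
      · exact Or.inl ⟨hl, c₁, hs, Or.inr hh1, Or.inr hh2⟩
      · exact Or.inr ⟨c'', c', hs, ht', Or.inr hh1, Or.inr hh2⟩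

theorem semib_isBranching : IsBranchingBisim tr tau (SemiBisim tr tau) := by
  refine ⟨fun a b h => semib_symm h, ?_⟩
  intro a b a' l hab ht
  rcases semib_isSemi.2 a b a' l hab ht with ⟨hl, b₁, hs, h1, h2⟩ | h
  · exact Or.inl ⟨hl, semib_trans h2 (semib_trans (semib_symm h1) hab)⟩
  · exact Or.inr h

theorem brb_iff_semib {a b : S} : BrBisim tr tau a b ↔ SemiBisim tr tau a b := by
  constructor
  · rintro ⟨R, hR, hab⟩
    exact ⟨R, isSemiBr_of_isBranching hR, hab⟩
  · intro h
    exact ⟨SemiBisim tr tau, semib_isBranching, h⟩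

theorem brb_trans {a b c : S} (h1 : BrBisim tr tau a b) (h2 : BrBisim tr tau b c) :
    BrBisim tr tau a c :=
  brb_iff_semib.mpr (semib_trans (brb_iff_semib.mp h1) (brb_iff_semib.mp h2))

theorem brb_runmatch {a b a' : S} (hab : BrBisim tr tau a b) (hrun : SilentStar tr tau a a') :
    ∃ b', SilentStar tr tau b b' ∧ BrBisim tr tau a' b' := by
  suffices H : ∀ d, BrBisim tr tau a d → ∃ c', SilentStar tr tau d c' ∧ BrBisim tr tau a' c' from H b hab
  clear hab
  have H : ∀ c, BrBisim tr tau a c → ∃ c', SilentStar tr tau c c' ∧ BrBisim tr tau a' c' := by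
    induction hrun using Relation.ReflTransGen.head_induction_on with
    | refl => exact fun c hc => ⟨c, .refl, hc⟩
    | head hstep _ ih =>
      intro c hc
      rcases brb_transfer hc hstep with ⟨-, h2⟩ | ⟨c'', c', hs, ht, -, h2⟩
      · exact ih _ h2
      · obtain ⟨c₂, hs', hr⟩ := ih _ h2
        exact ⟨c₂, (hs.tail ht).trans hs', hr⟩
  exact H

theorem brb_stutter {a a₁ a₂ : S} (h1 : SilentStar tr tau a a₁) (h2 : SilentStar tr tau a₁ a₂)
    (h : BrBisim tr tau a a₂) : BrBisim tr tau a₁ a := by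
  set D : S → S → Prop := fun x s => ∃ r₀ rₙ, SilentStar tr tau r₀ x ∧ SilentStar tr tau x rₙ ∧
    BrBisim tr tau r₀ s ∧ BrBisim tr tau rₙ s with hD
  have hDb : ∀ {x s : S}, BrBisim tr tau x s → D x s := fun h' => ⟨_, _, .refl, .refl, h', h'⟩
  refine brb_iff_semib.mpr ⟨fun u v => D u v ∨ D v u, ⟨?_, ?_⟩,
    Or.inl ⟨a, a₂, h1, h2, brb_refl a, brb_symm h⟩⟩
  · rintro u v (h' | h')
    · exact Or.inr h'
    · exact Or.inl h'
  · rintro x s t l (⟨r₀, rₙ, hr0, hrn, hb0, hbn⟩ | ⟨r₀, rₙ, hr0, hrn, hb0, hbn⟩) ht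
    · obtain ⟨s₁, hs1, hxs1⟩ := brb_runmatch hb0 hr0
      rcases brb_transfer hxs1 ht with ⟨hl, htb⟩ | ⟨s'', s', hss, hts, hbm, hbm'⟩
      · exact Or.inl ⟨hl, s₁, hs1, Or.inl (hDb hxs1), Or.inl (hDb htb)⟩
      · exact Or.inr ⟨s'', s', hs1.trans hss, hts, Or.inl (hDb hbm), Or.inl (hDb hbm')⟩
    · -- here D s x : r₀ ⇒ s ⇒ rₙ, r₀ ≃ x, rₙ ≃ x ; move x →l t
      have hxn : BrBisim tr tau x rₙ := brb_symm hbn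
      rcases brb_transfer hxn ht with ⟨hl, h'⟩ | ⟨r'', r', hs, ht', hbm, hbm'⟩
      · exact Or.inl ⟨hl, rₙ, hrn, Or.inl (hDb hxn), Or.inl (hDb h')⟩
      · exact Or.inr ⟨r'', r', hrn.trans hs, ht', Or.inl (hDb hbm), Or.inl (hDb hbm')⟩

/-! ### Weak bisimilarity -/

theorem wkb_symm {a b : S} (h : WkBisim tr tau a b) : WkBisim tr tau b a :=
  let ⟨R, hR, hab⟩ := h; ⟨R, hR, hR.1 hab⟩

theorem wkb_refl (a : S) : WkBisim tr tau a a :=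
  ⟨Eq, ⟨fun _ _ h => h.symm, by
    rintro a b a' l rfl ht
    exact Or.inr ⟨a, a', a', .refl, ht, .refl, rfl⟩⟩, rfl⟩

theorem wkb_isBisim : IsWeakBisim tr tau (WkBisim tr tau) := by
  constructor
  · intro a b h; exact wkb_symm h
  · rintro a b a' l ⟨R, hR, hab⟩ ht
    rcases hR.2 a b a' l hab ht with ⟨hl, h⟩ | ⟨g1, g2, b', h1, h2, h3, h4⟩
    · exact Or.inl ⟨hl, R, hR, h⟩
    · exact Or.inr ⟨g1, g2, b', h1, h2, h3, ⟨R, hR, h4⟩⟩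

theorem wk_transfer {a b a' : S} {l : A} (h : WkBisim tr tau a b) (ht : tr a l a') :
    (l = tau ∧ WkBisim tr tau a' b) ∨
    ∃ g1 g2 b', SilentStar tr tau b g1 ∧ tr g1 l g2 ∧ SilentStar tr tau g2 b' ∧
      WkBisim tr tau a' b' :=
  wkb_isBisim.2 a b a' l h ht

theorem wk_runmatch {R : S → S → Prop} (hR : IsWeakBisim tr tau R) {b c b' : S}
    (hbc : R b c) (hrun : SilentStar tr tau b b') :
    ∃ c', SilentStar tr tau c c' ∧ R b' c' := by
  suffices H : ∀ d, R b d → ∃ c', SilentStar tr tau d c' ∧ R b' c' from H c hbc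
  clear hbc
  have H : ∀ c, R b c → ∃ c', SilentStar tr tau c c' ∧ R b' c' := by
    induction hrun using Relation.ReflTransGen.head_induction_on with
    | refl => exact fun c hc => ⟨c, .refl, hc⟩
    | head hstep _ ih =>
      intro c hc
      rcases hR.2 _ _ _ _ hc hstep with ⟨-, h2⟩ | ⟨g1, g2, c₁, hs1, ht1, hs2, h2⟩
      · exact ih _ h2
      · obtain ⟨c₂, hs', hr⟩ := ih _ h2
        exact ⟨c₂, ((hs1.tail ht1).trans hs2).trans hs', hr⟩
  exact H

theorem wk_comp_transfer {R Q : S → S → Prop} (hR : IsWeakBisim tr tau R)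
    (hQ : IsWeakBisim tr tau Q) {a b c a' : S} {l : A}
    (hab : R a b) (hbc : Q b c) (ht : tr a l a') :
    (l = tau ∧ ∃ m, R a' m ∧ Q m c) ∨
    (∃ g1 g2 c', SilentStar tr tau c g1 ∧ tr g1 l g2 ∧ SilentStar tr tau g2 c' ∧
      ∃ m, R a' m ∧ Q m c') := by
  rcases hR.2 _ _ _ _ hab ht with ⟨hl, h'⟩ | ⟨g1, g2, b', hs1, ht1, hs2, hb'⟩
  · exact Or.inl ⟨hl, b, h', hbc⟩
  · obtain ⟨c₁, hc1, hq1⟩ := wk_runmatch hQ hbc hs1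
    rcases hQ.2 _ _ _ _ hq1 ht1 with ⟨hl, hq2⟩ | ⟨h1, h2, c₂, hcs1, hct, hcs2, hq2⟩
    · obtain ⟨c₂, hc2, hq3⟩ := wk_runmatch hQ hq2 hs2
      rcases (hc1.trans hc2).cases_head with heq | ⟨d, hd, hrest⟩
      · subst hl
        exact Or.inl ⟨rfl, b', hb', heq ▸ hq3⟩
      · subst hl
        exact Or.inr ⟨c, d, c₂, .refl, hd, hrest, b', hb', hq3⟩
    · obtain ⟨c₃, hc3, hq3⟩ := wk_runmatch hQ hq2 hs2
      exact Or.inr ⟨h1, h2, c₃, hc1.trans hcs1, hct, hcs2.trans hc3, b', hb', hq3⟩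

theorem wkb_trans {a b c : S} (h1 : WkBisim tr tau a b) (h2 : WkBisim tr tau b c) :
    WkBisim tr tau a c := by
  obtain ⟨R, hR, hab⟩ := h1
  obtain ⟨Q, hQ, hbc⟩ := h2
  refine ⟨fun x y => (∃ m, R x m ∧ Q m y) ∨ (∃ m, Q x m ∧ R m y), ⟨?_, ?_⟩,
    Or.inl ⟨b, hab, hbc⟩⟩
  · rintro x y (⟨m, hx, hy⟩ | ⟨m, hx, hy⟩)
    · exact Or.inr ⟨m, hQ.1 hy, hR.1 hx⟩
    · exact Or.inl ⟨m, hR.1 hy, hQ.1 hx⟩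
  · rintro x y x' l (⟨m, hxm, hmy⟩ | ⟨m, hxm, hmy⟩) ht
    · rcases wk_comp_transfer hR hQ hxm hmy ht with ⟨hl, hh⟩ | ⟨g1, g2, c', hs1, ht', hs2, hh⟩
      · exact Or.inl ⟨hl, Or.inl hh⟩
      · exact Or.inr ⟨g1, g2, c', hs1, ht', hs2, Or.inl hh⟩
    · rcases wk_comp_transfer hQ hR hxm hmy ht with ⟨hl, hh⟩ | ⟨g1, g2, c', hs1, ht', hs2, hh⟩
      · exact Or.inl ⟨hl, Or.inr hh⟩
      · exact Or.inr ⟨g1, g2, c', hs1, ht', hs2, Or.inr hh⟩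

theorem wkb_runmatch {a b a' : S} (hab : WkBisim tr tau a b) (hrun : SilentStar tr tau a a') :
    ∃ b', SilentStar tr tau b b' ∧ WkBisim tr tau a' b' :=
  wk_runmatch wkb_isBisim hab hrun

theorem wkb_stutter {a a₁ a₂ : S} (h1 : SilentStar tr tau a a₁) (h2 : SilentStar tr tau a₁ a₂)
    (h : WkBisim tr tau a a₂) : WkBisim tr tau a₁ a := by
  set D : S → S → Prop := fun x s => ∃ r₀ rₙ, SilentStar tr tau r₀ x ∧ SilentStar tr tau x rₙ ∧
    WkBisim tr tau r₀ s ∧ WkBisim tr tau rₙ s with hD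
  have hDb : ∀ {x s : S}, WkBisim tr tau x s → D x s := fun h' => ⟨_, _, .refl, .refl, h', h'⟩
  refine ⟨fun u v => D u v ∨ D v u, ⟨?_, ?_⟩,
    Or.inl ⟨a, a₂, h1, h2, wkb_refl a, wkb_symm h⟩⟩
  · rintro u v (h' | h')
    · exact Or.inr h'
    · exact Or.inl h'
  · rintro x s t l (⟨r₀, rₙ, hr0, hrn, hb0, hbn⟩ | ⟨r₀, rₙ, hr0, hrn, hb0, hbn⟩) ht
    · obtain ⟨s₁, hs1, hxs1⟩ := wkb_runmatch hb0 hr0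
      rcases wk_transfer hxs1 ht with ⟨hl, htb⟩ | ⟨g1, g2, s', hsg, htg, hgs, htb⟩
      · rcases hs1.cases_head with heq | ⟨d, hd, hrest⟩
        · exact Or.inl ⟨hl, Or.inl (hDb (heq ▸ htb))⟩
        · subst hl
          exact Or.inr ⟨s, d, s₁, .refl, hd, hrest, Or.inl (hDb htb)⟩
      · exact Or.inr ⟨g1, g2, s', hs1.trans hsg, htg, hgs, Or.inl (hDb htb)⟩
    · -- D s x : r₀ ⇒ s ⇒ rₙ, r₀ ≈ x, rₙ ≈ x ; move x →l t
      have hxn : WkBisim tr tau x rₙ := wkb_symm hbn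
      rcases wk_transfer hxn ht with ⟨hl, h'⟩ | ⟨g1, g2, r', hsg, htg, hgs, h'⟩
      · rcases hrn.cases_head with heq | ⟨d, hd, hrest⟩
        · exact Or.inl ⟨hl, Or.inl (hDb (heq ▸ h'))⟩
        · subst hl
          exact Or.inr ⟨s, d, rₙ, .refl, hd, hrest, Or.inl (hDb h')⟩
      · exact Or.inr ⟨g1, g2, r', hrn.trans hsg, htg, hgs, Or.inl (hDb h')⟩

end LTSLemmas

section BPALemmas

variable {V A : Type*} {rules : V → A → List V → Prop} {tau : A}

theorem trans_append {p q r : List V} {l : A} (h : BPA.Trans rules p l q) :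
    BPA.Trans rules (p ++ r) l (q ++ r) := by
  obtain ⟨X, γ, β, rfl, hr, rfl⟩ := h
  exact ⟨X, γ, β ++ r, rfl, hr, List.append_assoc γ β r⟩

theorem silent_append {p q : List V} (r : List V)
    (h : SilentStar (BPA.Trans rules) tau p q) :
    SilentStar (BPA.Trans rules) tau (p ++ r) (q ++ r) :=
  Relation.ReflTransGen.lift (r := fun a b => BPA.Trans rules a tau b)
    (p := fun a b => BPA.Trans rules a tau b) (· ++ r) (fun _ _ h' => trans_append h') _ _ h

theorem trans_nil_elim {l : A} {q : List V} (h : BPA.Trans rules [] l q) : False := by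
  obtain ⟨X, γ, β, h, -, -⟩ := h
  cases h

theorem silent_nil {q : List V} (h : SilentStar (BPA.Trans rules) tau [] q) : q = [] := by
  rcases h.cases_head with h | ⟨c, hc, -⟩
  · exact h.symm
  · exact absurd hc trans_nil_elim

/-- Reaching ε with at most `n` non-silent steps (silent steps are free, any step
may be counted). -/
inductive NReach (rules : V → A → List V → Prop) (tau : A) : List V → ℕ → Prop
  | nil (n : ℕ) : NReach rules tau [] n
  | tau_step {p p' : List V} {n : ℕ} :
      BPA.Trans rules p tau p' → NReach rules tau p' n → NReach rules tau p n
  | act {p p' : List V} {n : ℕ} (l : A) :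
      BPA.Trans rules p l p' → NReach rules tau p' n → NReach rules tau p (n + 1)

theorem NReach.mono {p : List V} {n m : ℕ} (h : NReach rules tau p n) (hnm : n ≤ m) :
    NReach rules tau p m := by
  induction h generalizing m with
  | nil => exact .nil m
  | tau_step ht _ ih => exact .tau_step ht (ih hnm)
  | act l ht _ ih =>
    cases m with
    | zero => omega
    | succ m' => exact .act l ht (ih (by omega))

theorem NReach.append {p q : List V} {n m : ℕ} (hp : NReach rules tau p n)
    (hq : NReach rules tau q m) : NReach rules tau (p ++ q) (n + m) := by
  induction hp with
  | nil n => exact hq.mono (Nat.le_add_left m n)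
  | tau_step ht _ ih => exact .tau_step (trans_append ht) ih
  | act l ht _ ih =>
    have := NReach.act l (trans_append ht) ih
    rwa [Nat.add_right_comm] at this

theorem NReach.split {p q : List V} {n : ℕ} (h : NReach rules tau (p ++ q) n) :
    ∃ n1 n2, n1 + n2 = n ∧ NReach rules tau p n1 ∧ NReach rules tau q n2 := by
  generalize hpq : p ++ q = r at h
  induction h generalizing p with
  | nil n =>
    obtain ⟨rfl, rfl⟩ := List.append_eq_nil_iff.mp hpq
    exact ⟨0, n, by omega, .nil 0, .nil n⟩
  | @tau_step r r' n ht hr ih =>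
    cases p with
    | nil =>
      subst hpq
      exact ⟨0, n, by omega, .nil 0, .tau_step ht hr⟩
    | cons X p₀ =>
      obtain ⟨Y, γ, β, hY, hrule, rfl⟩ := ht
      rw [List.cons_append] at hpq
      rw [← hpq] at hY
      injection hY with h1 h2
      subst h1; subst h2
      obtain ⟨n1, n2, hsum, h1, h2⟩ := ih (p := γ ++ p₀) (by rw [List.append_assoc])
      exact ⟨n1, n2, hsum, .tau_step ⟨X, γ, p₀, rfl, hrule, rfl⟩ h1, h2⟩
  | @act r r' n l ht hr ih =>
    cases p with
    | nil =>
      subst hpq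
      exact ⟨0, n + 1, by omega, .nil 0, .act l ht hr⟩
    | cons X p₀ =>
      obtain ⟨Y, γ, β, hY, hrule, rfl⟩ := ht
      rw [List.cons_append] at hpq
      rw [← hpq] at hY
      injection hY with h1 h2
      subst h1; subst h2
      obtain ⟨n1, n2, hsum, h1, h2⟩ := ih (p := γ ++ p₀) (by rw [List.append_assoc])
      exact ⟨n1 + 1, n2, by omega, .act l ⟨X, γ, p₀, rfl, hrule, rfl⟩ h1, h2⟩

theorem silent_nreach {p p' : List V} {n : ℕ}
    (hrun : SilentStar (BPA.Trans rules) tau p p') (h : NReach rules tau p' n) :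
    NReach rules tau p n := by
  revert h
  induction hrun with
  | refl => exact id
  | tail _ ht ih => exact fun h => ih (.tau_step ht h)

theorem nreach_zero_silent {p : List V} (h : NReach rules tau p 0) :
    SilentStar (BPA.Trans rules) tau p [] := by
  generalize hn : (0 : ℕ) = n at h
  induction h with
  | nil => exact .refl
  | tau_step ht _ ih => exact Relation.ReflTransGen.head ht (ih hn)
  | act l ht _ ih => omega

theorem reach_nreach {p q : List V} (h : BPA.Reach rules p q)
    (hq : ∃ m, NReach rules tau q m) : ∃ n, NReach rules tau p n := by
  revert hq
  induction h with
  | refl => exact id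
  | tail _ hbc ih =>
    rintro ⟨m, hm⟩
    obtain ⟨l, ht⟩ := hbc
    exact ih ⟨m + 1, .act l ht hm⟩

theorem exists_nreach (hn : BPA.Normed rules) : ∀ p : List V, ∃ n, NReach rules tau p n
  | [] => ⟨0, .nil 0⟩
  | X :: p₀ => by
    obtain ⟨k, hk⟩ := reach_nreach (tau := tau) (hn X) ⟨0, .nil 0⟩
    obtain ⟨m, hm⟩ := exists_nreach hn p₀
    exact ⟨k + m, hk.append hm⟩

theorem brb_nil_nreach (hn : BPA.Normed rules) {p : List V}
    (h : BrBisim (BPA.Trans rules) tau p []) : NReach rules tau p 0 := by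
  obtain ⟨m, hm⟩ := exists_nreach (tau := tau) hn p
  revert h
  induction hm with
  | nil => exact fun _ => .nil 0
  | tau_step ht _ ih =>
    intro h
    rcases brb_transfer h ht with ⟨-, h'⟩ | ⟨b'', b', hs, ht', -, -⟩
    · exact .tau_step ht (ih h')
    · rw [silent_nil hs] at ht'
      exact absurd ht' trans_nil_elim
  | act l ht _ ih =>
    intro h
    rcases brb_transfer h ht with ⟨rfl, h'⟩ | ⟨b'', b', hs, ht', -, -⟩
    · exact .tau_step ht (ih h')
    · rw [silent_nil hs] at ht'
      exact absurd ht' trans_nil_elim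

theorem wkb_nil_nreach (hn : BPA.Normed rules) {p : List V}
    (h : WkBisim (BPA.Trans rules) tau p []) : NReach rules tau p 0 := by
  obtain ⟨m, hm⟩ := exists_nreach (tau := tau) hn p
  revert h
  induction hm with
  | nil => exact fun _ => .nil 0
  | tau_step ht _ ih =>
    intro h
    rcases wk_transfer h ht with ⟨-, h'⟩ | ⟨g1, g2, b', hs, ht', -, -⟩
    · exact .tau_step ht (ih h')
    · rw [silent_nil hs] at ht'
      exact absurd ht' trans_nil_elim
  | act l ht _ ih =>
    intro h
    rcases wk_transfer h ht with ⟨rfl, h'⟩ | ⟨g1, g2, b', hs, ht', -, -⟩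
    · exact .tau_step ht (ih h')
    · rw [silent_nil hs] at ht'
      exact absurd ht' trans_nil_elim

theorem brb_nreach (hn : BPA.Normed rules) {p q : List V} {n : ℕ}
    (h : BrBisim (BPA.Trans rules) tau p q) (hq : NReach rules tau q n) :
    NReach rules tau p n := by
  induction hq generalizing p with
  | nil n => exact (brb_nil_nreach hn h).mono (Nat.zero_le n)
  | tau_step ht _ ih =>
    rcases brb_transfer (brb_symm h) ht with ⟨-, h'⟩ | ⟨p'', p₂, hs, ht', -, h2⟩
    · exact ih (brb_symm h')
    · exact silent_nreach hs (.tau_step ht' (ih (brb_symm h2)))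
  | act l ht _ ih =>
    rcases brb_transfer (brb_symm h) ht with ⟨rfl, h'⟩ | ⟨p'', p₂, hs, ht', -, h2⟩
    · exact (ih (brb_symm h')).mono (by omega)
    · exact silent_nreach hs (.act l ht' (ih (brb_symm h2)))

theorem wkb_nreach (hn : BPA.Normed rules) {p q : List V} {n : ℕ}
    (h : WkBisim (BPA.Trans rules) tau p q) (hq : NReach rules tau q n) :
    NReach rules tau p n := by
  induction hq generalizing p with
  | nil n => exact (wkb_nil_nreach hn h).mono (Nat.zero_le n)
  | tau_step ht _ ih =>
    rcases wk_transfer (wkb_symm h) ht with ⟨-, h'⟩ | ⟨g1, g2, p₂, hs1, ht', hs2, h2⟩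
    · exact ih (wkb_symm h')
    · exact silent_nreach hs1 (.tau_step ht' (silent_nreach hs2 (ih (wkb_symm h2))))
  | act l ht _ ih =>
    rcases wk_transfer (wkb_symm h) ht with ⟨rfl, h'⟩ | ⟨g1, g2, p₂, hs1, ht', hs2, h2⟩
    · exact (ih (wkb_symm h')).mono (by omega)
    · exact silent_nreach hs1 (.act l ht' (silent_nreach hs2 (ih (wkb_symm h2))))

/-! ### Congruence -/

theorem brb_congr (γ : List V) {β β' : List V}
    (h : BrBisim (BPA.Trans rules) tau β β') :
    BrBisim (BPA.Trans rules) tau (γ ++ β) (γ ++ β') := by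
  refine ⟨fun p q => ∃ δ m m', p = δ ++ m ∧ q = δ ++ m' ∧ BrBisim (BPA.Trans rules) tau m m',
    ⟨?_, ?_⟩, γ, β, β', rfl, rfl, h⟩
  · rintro p q ⟨δ, m, m', rfl, rfl, hm⟩
    exact ⟨δ, m', m, rfl, rfl, brb_symm hm⟩
  · rintro p q p' l ⟨δ, m, m', rfl, rfl, hm⟩ ht
    cases δ with
    | nil =>
      simp only [List.nil_append] at ht ⊢
      rcases brb_transfer hm ht with ⟨hl, h'⟩ | ⟨b'', b', hs, ht', h1, h2⟩
      · exact Or.inl ⟨hl, [], p', m', rfl, rfl, h'⟩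
      · exact Or.inr ⟨b'', b', hs, ht', ⟨[], m, b'', rfl, rfl, h1⟩, ⟨[], p', b', rfl, rfl, h2⟩⟩
    | cons X δ₀ =>
      obtain ⟨Y, γ', β₀, heq, hrule, rfl⟩ := ht
      rw [List.cons_append] at heq
      injection heq with h1 h2
      subst h1; subst h2
      refine Or.inr ⟨(X :: δ₀) ++ m', γ' ++ (δ₀ ++ m'), .refl,
        ⟨X, γ', δ₀ ++ m', rfl, hrule, rfl⟩, ⟨X :: δ₀, m, m', rfl, rfl, hm⟩,
        ⟨γ' ++ δ₀, m, m', by rw [List.append_assoc], by rw [List.append_assoc], hm⟩⟩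

theorem wkb_congr (γ : List V) {β β' : List V}
    (h : WkBisim (BPA.Trans rules) tau β β') :
    WkBisim (BPA.Trans rules) tau (γ ++ β) (γ ++ β') := by
  refine ⟨fun p q => ∃ δ m m', p = δ ++ m ∧ q = δ ++ m' ∧ WkBisim (BPA.Trans rules) tau m m',
    ⟨?_, ?_⟩, γ, β, β', rfl, rfl, h⟩
  · rintro p q ⟨δ, m, m', rfl, rfl, hm⟩
    exact ⟨δ, m', m, rfl, rfl, wkb_symm hm⟩
  · rintro p q p' l ⟨δ, m, m', rfl, rfl, hm⟩ ht
    cases δ with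
    | nil =>
      simp only [List.nil_append] at ht ⊢
      rcases wk_transfer hm ht with ⟨hl, h'⟩ | ⟨g1, g2, b', hs1, ht', hs2, h2⟩
      · exact Or.inl ⟨hl, [], p', m', rfl, rfl, h'⟩
      · exact Or.inr ⟨g1, g2, b', hs1, ht', hs2, ⟨[], p', b', rfl, rfl, h2⟩⟩
    | cons X δ₀ =>
      obtain ⟨Y, γ', β₀, heq, hrule, rfl⟩ := ht
      rw [List.cons_append] at heq
      injection heq with h1 h2
      subst h1; subst h2
      refine Or.inr ⟨(X :: δ₀) ++ m', γ' ++ (δ₀ ++ m'), γ' ++ (δ₀ ++ m'), .refl,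
        ⟨X, γ', δ₀ ++ m', rfl, hrule, rfl⟩, .refl,
        ⟨γ' ++ δ₀, m, m', by rw [List.append_assoc], by rw [List.append_assoc], hm⟩⟩

end BPALemmas

section Main

variable {V A : Type*} {rules : V → A → List V → Prop} {tau : A}

theorem fwd_br (hn : BPA.Normed rules) (α : List V) :
    ∀ Xs : List V, BrBisim (BPA.Trans rules) tau (Xs ++ α) α →
      ∀ X ∈ Xs, BrBisim (BPA.Trans rules) tau (X :: α) α := by
  intro Xs
  induction Xs with
  | nil => intro _ X hX; cases hX
  | cons X δ ih =>
    intro h Y hY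
    rw [List.cons_append] at h
    have hne : {n | NReach rules tau α n}.Nonempty := exists_nreach hn α
    have hmem : NReach rules tau α (sInf {n | NReach rules tau α n}) := Nat.sInf_mem hne
    have hXδα : NReach rules tau (X :: (δ ++ α)) (sInf {n | NReach rules tau α n}) :=
      brb_nreach hn h hmem
    obtain ⟨a, b, hab, hX0, hrest⟩ := NReach.split (p := [X]) (q := δ ++ α) hXδα
    obtain ⟨c, d, hcd, hδ0, hα⟩ := NReach.split hrest
    have hd : sInf {n | NReach rules tau α n} ≤ d := Nat.sInf_le hα
    have ha0 : a = 0 := by omega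
    have hc0 : c = 0 := by omega
    subst ha0; subst hc0
    have hXsil : SilentStar (BPA.Trans rules) tau [X] [] := nreach_zero_silent hX0
    have hδsil : SilentStar (BPA.Trans rules) tau δ [] := nreach_zero_silent hδ0
    have run1 : SilentStar (BPA.Trans rules) tau (X :: (δ ++ α)) (δ ++ α) :=
      silent_append (δ ++ α) hXsil
    have run2 : SilentStar (BPA.Trans rules) tau (δ ++ α) α := silent_append α hδsil
    obtain ⟨α₁, hs1, h1⟩ := brb_runmatch h run1
    obtain ⟨α₂, hs2, h2⟩ := brb_runmatch h1 run2
    have hα₁ : BrBisim (BPA.Trans rules) tau α₁ α := brb_stutter hs1 hs2 h2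
    have hδα : BrBisim (BPA.Trans rules) tau (δ ++ α) α := brb_trans h1 hα₁
    rcases List.mem_cons.mp hY with rfl | hY
    · have hc : BrBisim (BPA.Trans rules) tau (Y :: (δ ++ α)) (Y :: α) := brb_congr [Y] hδα
      exact brb_trans (brb_symm hc) h
    · exact ih hδα Y hY

theorem bwd_br (α : List V) :
    ∀ Xs : List V, (∀ X ∈ Xs, BrBisim (BPA.Trans rules) tau (X :: α) α) →
      BrBisim (BPA.Trans rules) tau (Xs ++ α) α := by
  intro Xs
  induction Xs with
  | nil => intro _; exact brb_refl α
  | cons X δ ih =>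
    intro h
    have hδ := ih fun Y hY => h Y (List.mem_cons_of_mem X hY)
    have hc : BrBisim (BPA.Trans rules) tau (X :: (δ ++ α)) (X :: α) := brb_congr [X] hδ
    rw [List.cons_append]
    exact brb_trans hc (h X (List.mem_cons_self ..))

theorem fwd_wk (hn : BPA.Normed rules) (α : List V) :
    ∀ Xs : List V, WkBisim (BPA.Trans rules) tau (Xs ++ α) α →
      ∀ X ∈ Xs, WkBisim (BPA.Trans rules) tau (X :: α) α := by
  intro Xs
  induction Xs with
  | nil => intro _ X hX; cases hX
  | cons X δ ih =>
    intro h Y hY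
    rw [List.cons_append] at h
    have hne : {n | NReach rules tau α n}.Nonempty := exists_nreach hn α
    have hmem : NReach rules tau α (sInf {n | NReach rules tau α n}) := Nat.sInf_mem hne
    have hXδα : NReach rules tau (X :: (δ ++ α)) (sInf {n | NReach rules tau α n}) :=
      wkb_nreach hn h hmem
    obtain ⟨a, b, hab, hX0, hrest⟩ := NReach.split (p := [X]) (q := δ ++ α) hXδα
    obtain ⟨c, d, hcd, hδ0, hα⟩ := NReach.split hrest
    have hd : sInf {n | NReach rules tau α n} ≤ d := Nat.sInf_le hα
    have ha0 : a = 0 := by omega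
    have hc0 : c = 0 := by omega
    subst ha0; subst hc0
    have hXsil : SilentStar (BPA.Trans rules) tau [X] [] := nreach_zero_silent hX0
    have hδsil : SilentStar (BPA.Trans rules) tau δ [] := nreach_zero_silent hδ0
    have run1 : SilentStar (BPA.Trans rules) tau (X :: (δ ++ α)) (δ ++ α) :=
      silent_append (δ ++ α) hXsil
    have run2 : SilentStar (BPA.Trans rules) tau (δ ++ α) α := silent_append α hδsil
    obtain ⟨α₁, hs1, h1⟩ := wkb_runmatch h run1
    obtain ⟨α₂, hs2, h2⟩ := wkb_runmatch h1 run2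
    have hα₁ : WkBisim (BPA.Trans rules) tau α₁ α := wkb_stutter hs1 hs2 h2
    have hδα : WkBisim (BPA.Trans rules) tau (δ ++ α) α := wkb_trans h1 hα₁
    rcases List.mem_cons.mp hY with rfl | hY
    · have hc : WkBisim (BPA.Trans rules) tau (Y :: (δ ++ α)) (Y :: α) := wkb_congr [Y] hδα
      exact wkb_trans (wkb_symm hc) h
    · exact ih hδα Y hY

theorem bwd_wk (α : List V) :
    ∀ Xs : List V, (∀ X ∈ Xs, WkBisim (BPA.Trans rules) tau (X :: α) α) →
      WkBisim (BPA.Trans rules) tau (Xs ++ α) α := by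
  intro Xs
  induction Xs with
  | nil => intro _; exact wkb_refl α
  | cons X δ ih =>
    intro h
    have hδ := ih fun Y hY => h Y (List.mem_cons_of_mem X hY)
    have hc : WkBisim (BPA.Trans rules) tau (X :: (δ ++ α)) (X :: α) := wkb_congr [X] hδ
    rw [List.cons_append]
    exact wkb_trans hc (h X (List.mem_cons_self ..))

end Main

/-- Fu's decomposition lemma: X₁…X_kα ≃ α iff X_iα ≃ α for every i, and the
same for weak bisimilarity. -/
theorem fu_decomposition {V A : Type*} (rules : V → A → List V → Prop) (tau : A)
    (hn : BPA.Normed rules) (Xs : List V) (α : List V) :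
    (BrBisim (BPA.Trans rules) tau (Xs ++ α) α ↔
      ∀ X ∈ Xs, BrBisim (BPA.Trans rules) tau (X :: α) α) ∧
    (WkBisim (BPA.Trans rules) tau (Xs ++ α) α ↔
      ∀ X ∈ Xs, WkBisim (BPA.Trans rules) tau (X :: α) α) :=
  ⟨⟨fun h X hX => fwd_br hn α Xs h X hX, fun h => bwd_br α Xs h⟩,
   ⟨fun h X hX => fwd_wk hn α Xs h X hX, fun h => bwd_wk α Xs h⟩⟩
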